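/- There exists a constant α > 0 such that for every positive integer n there exist measurable sets A, B ⊂ ℝⁿ with 0 < λ(A) < ∞, 0 < λ(B) < ∞ and a measurable set Θ ⊂ A × B with λ(Θ) > α·λ(A)·λ(B), for which λ(A +_Θ B)^{2/n} < λ(A)^{2/n} + λ(B)^{2/n}. -/

import Mathlib

open MeasureTheory Metric

/-- The restricted (to `Θ`) Minkowski sum `A +_Θ B = { x + y : (x, y) ∈ Θ }`. -/
def restrictedSum {n : ℕ} (Θ : Set (EuclideanSpace ℝ (Fin n) × EuclideanSpace ℝ (Fin n))) :
    Set (EuclideanSpace ℝ (Fin n)) :=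
  (fun p => p.1 + p.2) '' Θ

/-- Half of a ball (cut by the hyperplane orthogonal to `x`) has at least half the measure. -/
lemma half_ball_bound (n : ℕ) (x : EuclideanSpace ℝ (Fin n)) (ρ : ℝ) :
    volume (closedBall (0 : EuclideanSpace ℝ (Fin n)) ρ)
      ≤ 2 * volume {y : EuclideanSpace ℝ (Fin n) | ‖y‖ ≤ ρ ∧ inner ℝ x y ≤ 0} := by
  set E := {y : EuclideanSpace ℝ (Fin n) | ‖y‖ ≤ ρ ∧ inner ℝ x y ≤ 0}
  have hsub : closedBall (0 : EuclideanSpace ℝ (Fin n)) ρ ⊆ E ∪ (-E) := by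
    intro y hy
    simp only [mem_closedBall, dist_zero_right] at hy
    rcases le_total (inner ℝ x y) 0 with h | h
    · exact Or.inl ⟨hy, h⟩
    · refine Or.inr ?_
      rw [Set.mem_neg]
      exact ⟨by simpa using hy, by simpa using h⟩
  calc volume (closedBall (0 : EuclideanSpace ℝ (Fin n)) ρ) ≤ volume (E ∪ (-E)) :=
        measure_mono hsub
    _ ≤ volume E + volume (-E) := measure_union_le _ _
    _ = 2 * volume E := by rw [Measure.measure_neg]; ring

theorem restricted_minkowski_optimality_alpha :
    ∃ α : ℝ, 0 < α ∧
      ∀ (n : ℕ), 0 < n →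
        ∃ (A B : Set (EuclideanSpace ℝ (Fin n)))
          (Θ : Set (EuclideanSpace ℝ (Fin n) × EuclideanSpace ℝ (Fin n))),
          MeasurableSet A ∧ MeasurableSet B ∧
          0 < volume A ∧ volume A < ⊤ ∧ 0 < volume B ∧ volume B < ⊤ ∧
          MeasurableSet Θ ∧ Θ ⊆ A ×ˢ B ∧
          ENNReal.ofReal α * (volume A * volume B) < volume Θ ∧
          volume (restrictedSum Θ) ^ ((2 : ℝ) / n)
            < volume A ^ ((2 : ℝ) / n) + volume B ^ ((2 : ℝ) / n) := by
  classical
  refine ⟨1/8, by norm_num, fun n hn => ?_⟩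
  have hn' : (0:ℝ) < n := by exact_mod_cast hn
  have hn1 : (1:ℝ) ≤ n := by exact_mod_cast hn
  set ρ : ℝ := Real.sqrt (1 - 1/(2*n)) with hρdef
  have hbase0 : (0:ℝ) ≤ 1 - 1/(2*n) := by
    rw [sub_nonneg, div_le_one (by positivity)]; linarith
  have hρ0 : 0 ≤ ρ := Real.sqrt_nonneg _
  have hρsq : ρ^2 = 1 - 1/(2*n) := Real.sq_sqrt hbase0
  have hρ1 : ρ ≤ 1 := by
    rw [hρdef]
    refine Real.sqrt_le_one.mpr ?_
    have : 0 < 1/(2*(n:ℝ)) := by positivity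
    linarith
  -- the unit ball and its volume
  set ι := volume (closedBall (0 : EuclideanSpace ℝ (Fin n)) 1) with hιdef
  have hι0 : 0 < ι := measure_closedBall_pos _ _ one_pos
  have hιtop : ι < ⊤ := measure_closedBall_lt_top
  -- the restricted domain
  set Θ : Set (EuclideanSpace ℝ (Fin n) × EuclideanSpace ℝ (Fin n)) :=
    {p | ‖p.1‖ ≤ ρ ∧ ‖p.2‖ ≤ ρ ∧ inner ℝ p.1 p.2 ≤ 0} with hΘdef
  have hΘm : MeasurableSet Θ := by
    refine IsClosed.measurableSet ?_
    have h1 : IsClosed {p : EuclideanSpace ℝ (Fin n) × EuclideanSpace ℝ (Fin n) | ‖p.1‖ ≤ ρ} :=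
      isClosed_le (continuous_norm.comp continuous_fst) continuous_const
    have h2 : IsClosed {p : EuclideanSpace ℝ (Fin n) × EuclideanSpace ℝ (Fin n) | ‖p.2‖ ≤ ρ} :=
      isClosed_le (continuous_norm.comp continuous_snd) continuous_const
    have h3 : IsClosed {p : EuclideanSpace ℝ (Fin n) × EuclideanSpace ℝ (Fin n) |
        inner ℝ p.1 p.2 ≤ 0} := isClosed_le continuous_inner continuous_const
    exact (h1.inter (h2.inter h3) : _)
  -- volume of the ρ-ball
  have hball : ∀ r : ℝ, 0 ≤ r →
      volume (closedBall (0 : EuclideanSpace ℝ (Fin n)) r) = ENNReal.ofReal (r ^ n) * ι := by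
    intro r hr
    rw [hιdef, Measure.addHaar_closedBall' _ _ hr, finrank_euclideanSpace_fin]
  -- lower bound for the volume of Θ
  have hΘvol : ENNReal.ofReal (1/4) * (ι * ι) ≤ volume Θ := by
    have hsect : ∀ x : EuclideanSpace ℝ (Fin n),
        (closedBall (0 : EuclideanSpace ℝ (Fin n)) ρ).indicator
          (fun _ => ENNReal.ofReal (ρ^n/2) * ι) x ≤ volume (Prod.mk x ⁻¹' Θ) := by
      intro x
      by_cases hx : x ∈ closedBall (0 : EuclideanSpace ℝ (Fin n)) ρ
      · rw [Set.indicator_of_mem hx]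
        have hxn : ‖x‖ ≤ ρ := by simpa [mem_closedBall, dist_zero_right] using hx
        have hpre : Prod.mk x ⁻¹' Θ
            = {y : EuclideanSpace ℝ (Fin n) | ‖y‖ ≤ ρ ∧ inner ℝ x y ≤ 0} := by
          ext y; simp [hΘdef, hxn]
        rw [hpre]
        have h2 := half_ball_bound n x ρ
        rw [hball ρ hρ0] at h2
        have hkey : 2 * (ENNReal.ofReal (ρ^n/2) * ι)
            ≤ 2 * volume {y : EuclideanSpace ℝ (Fin n) | ‖y‖ ≤ ρ ∧ inner ℝ x y ≤ 0} := by
          refine le_trans (le_of_eq ?_) h2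
          rw [← mul_assoc, ← ENNReal.ofReal_ofNat, ← ENNReal.ofReal_mul (by norm_num)]
          congr 2
          ring
        exact (ENNReal.mul_le_mul_iff_right (by norm_num) (by norm_num)).mp hkey
      · rw [Set.indicator_of_notMem hx]; exact zero_le
    have hfub : volume Θ = ∫⁻ x, volume (Prod.mk x ⁻¹' Θ) := by
      rw [Measure.volume_eq_prod, Measure.prod_apply hΘm]
    rw [hfub]
    refine le_trans ?_ (lintegral_mono hsect)
    rw [lintegral_indicator measurableSet_closedBall _, setLIntegral_const, hball ρ hρ0]
    -- now: ofReal (1/4) * (ι * ι) ≤ ofReal (ρ^n/2) * ι * (ofReal (ρ^n) * ι)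
    have hbern : (1:ℝ)/2 ≤ ρ^n * ρ^n := by
      have : ρ^n * ρ^n = (ρ^2)^n := by ring
      rw [this, hρsq]
      have hsmall : 1/(2*(n:ℝ)) ≤ 1 := by
        rw [div_le_one (by positivity)]; linarith
      have ha : (-2:ℝ) ≤ -(1/(2*(n:ℝ))) := by linarith
      have hb := one_add_mul_le_pow ha n
      have heq : (1:ℝ) + n * -(1/(2*n)) = 1/2 := by
        have hne : (n:ℝ) ≠ 0 := hn'.ne'
        field_simp
        ring
      rw [heq] at hb
      calc (1:ℝ)/2 ≤ (1 + -(1/(2*n)))^n := hb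
        _ = (1 - 1/(2*n))^n := by ring_nf
    calc ENNReal.ofReal (1/4) * (ι * ι)
        ≤ ENNReal.ofReal (ρ^n/2 * ρ^n) * (ι * ι) := by
          gcongr
          nlinarith [hbern]
      _ = ENNReal.ofReal (ρ^n/2) * ι * (ENNReal.ofReal (ρ^n) * ι) := by
          rw [ENNReal.ofReal_mul (by positivity)]; ring
  -- inclusion of the restricted sum in a smaller ball
  have hsum : restrictedSum Θ ⊆ closedBall (0 : EuclideanSpace ℝ (Fin n))
      (Real.sqrt (2 - 1/n)) := by
    rintro z ⟨⟨x, y⟩, ⟨hx, hy, hxy⟩, rfl⟩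
    simp only [mem_closedBall, dist_zero_right]
    have hsq : ‖x + y‖^2 ≤ 2 - 1/n := by
      have hnorm : ‖x + y‖^2 = ‖x‖^2 + 2 * inner ℝ x y + ‖y‖^2 := norm_add_sq_real x y
      have hx2 : ‖x‖^2 ≤ 1 - 1/(2*n) := hρsq ▸ pow_le_pow_left₀ (norm_nonneg _) hx 2
      have hy2 : ‖y‖^2 ≤ 1 - 1/(2*n) := hρsq ▸ pow_le_pow_left₀ (norm_nonneg _) hy 2
      have h12 : 1/(2*(n:ℝ)) + 1/(2*n) = 1/n := by
        have hne : (n:ℝ) ≠ 0 := hn'.ne'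
        field_simp
        norm_num
      rw [hnorm]
      have hxy' : inner ℝ x y ≤ 0 := hxy
      linarith
    calc ‖x + y‖ = Real.sqrt (‖x + y‖^2) := (Real.sqrt_sq (norm_nonneg _)).symm
      _ ≤ Real.sqrt (2 - 1/n) := Real.sqrt_le_sqrt hsq
  -- conclusion
  have ht0 : (0:ℝ) ≤ 2 - 1/n := by
    have : 1/(n:ℝ) ≤ 1 := by rw [div_le_one hn']; linarith
    linarith
  have hexp0 : (0:ℝ) < 2 / n := by positivity
  have hιp : ι ^ ((2:ℝ)/n) ≠ 0 := by
    exact (ENNReal.rpow_pos hι0 hιtop.ne).ne'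
  have hιt : ι ^ ((2:ℝ)/n) ≠ ⊤ := (ENNReal.rpow_lt_top_of_nonneg hexp0.le hιtop.ne).ne
  refine ⟨closedBall 0 1, closedBall 0 1, Θ, measurableSet_closedBall, measurableSet_closedBall,
    hι0, hιtop, hι0, hιtop, hΘm, ?_, ?_, ?_⟩
  · rintro ⟨x, y⟩ ⟨hx, hy, -⟩
    exact ⟨by simpa [mem_closedBall, dist_zero_right] using hx.trans hρ1,
      by simpa [mem_closedBall, dist_zero_right] using hy.trans hρ1⟩
  · refine lt_of_lt_of_le ?_ hΘvol
    rw [ENNReal.mul_lt_mul_iff_left (mul_ne_zero hι0.ne' hι0.ne') (ENNReal.mul_ne_top hιtop.ne hιtop.ne)]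
    exact ENNReal.ofReal_lt_ofReal_iff (by norm_num) |>.mpr (by norm_num)
  · have hS : volume (restrictedSum Θ) ≤ ENNReal.ofReal (Real.sqrt (2 - 1/n) ^ n) * ι :=
      le_trans (measure_mono hsum) (le_of_eq (hball _ (Real.sqrt_nonneg _)))
    have hmain : volume (restrictedSum Θ) ^ ((2:ℝ)/n)
        ≤ ENNReal.ofReal (2 - 1/n) * ι ^ ((2:ℝ)/n) := by
      calc volume (restrictedSum Θ) ^ ((2:ℝ)/n)
          ≤ (ENNReal.ofReal (Real.sqrt (2 - 1/n) ^ n) * ι) ^ ((2:ℝ)/n) :=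
            ENNReal.rpow_le_rpow hS hexp0.le
        _ = ENNReal.ofReal (Real.sqrt (2 - 1/n) ^ n) ^ ((2:ℝ)/n) * ι ^ ((2:ℝ)/n) :=
            ENNReal.mul_rpow_of_nonneg _ _ hexp0.le
        _ = ENNReal.ofReal (2 - 1/n) * ι ^ ((2:ℝ)/n) := by
            congr 1
            rw [ENNReal.ofReal_rpow_of_nonneg (by positivity) hexp0.le]
            congr 1
            rw [← Real.rpow_natCast (Real.sqrt (2 - 1/n)) n, ← Real.rpow_mul (Real.sqrt_nonneg _)]
            have : (n:ℝ) * (2/n) = 2 := by field_simp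
            rw [this, Real.rpow_two, Real.sq_sqrt ht0]
    refine lt_of_le_of_lt hmain ?_
    have h2 : ENNReal.ofReal (2 - 1/n) < 2 := by
      rw [← ENNReal.ofReal_ofNat]
      refine ENNReal.ofReal_lt_ofReal_iff (by norm_num) |>.mpr ?_
      have h1n : 0 < 1/(n:ℝ) := by positivity
      exact sub_lt_self 2 h1n
    calc ENNReal.ofReal (2 - 1/n) * ι ^ ((2:ℝ)/n) < 2 * ι ^ ((2:ℝ)/n) := by
          rw [ENNReal.mul_lt_mul_iff_left hιp hιt]; exact h2
      _ = ι ^ ((2:ℝ)/n) + ι ^ ((2:ℝ)/n) := two_mul _
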